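/- For any two probability measures M and N on a measurable space, the squared Hellinger distance admits the integral representation H²(M,N) = (1/2) ∫₁^∞ [E_γ(M‖N) + E_γ(N‖M)] γ^{-3/2} dγ, where E_γ denotes the hockey-stick divergence. -/

import Mathlib

open MeasureTheory Set

noncomputable def Fk (a b γ : ℝ) : ℝ :=
  (max (a - γ * b) 0 + max (b - γ * a) 0) * γ ^ (-(3:ℝ)/2)

lemma Fk_nonneg {a b γ : ℝ} (hγ : 0 ≤ γ) : 0 ≤ Fk a b γ :=
  mul_nonneg (add_nonneg (le_max_right _ _) (le_max_right _ _)) (Real.rpow_nonneg hγ _)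

lemma deriv_aux {γ : ℝ} (hγ0 : 0 < γ) (a b : ℝ) :
    HasDerivAt (fun γ : ℝ => -2 * a * γ ^ (-(1:ℝ)/2) - 2 * b * γ ^ ((1:ℝ)/2))
      ((a - γ * b) * γ ^ (-(3:ℝ)/2)) γ := by
  have h1 := (Real.hasDerivAt_rpow_const (x := γ) (p := -(1:ℝ)/2) (Or.inl hγ0.ne')).const_mul
    (-2 * a)
  have h2 := (Real.hasDerivAt_rpow_const (x := γ) (p := (1:ℝ)/2) (Or.inl hγ0.ne')).const_mul
    (2 * b)
  have h := h1.sub h2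
  refine h.congr_deriv ?_
  have e1 : (-(1:ℝ)/2 - 1) = -(3:ℝ)/2 := by norm_num
  have e2 : ((1:ℝ)/2 - 1) = -(1:ℝ)/2 := by norm_num
  rw [e1, e2]
  have e3 : γ * γ ^ (-(3:ℝ)/2) = γ ^ (-(1:ℝ)/2) := by
    have h := (Real.rpow_add hγ0 1 (-(3:ℝ)/2)).symm
    rw [Real.rpow_one] at h
    rw [h]; norm_num
  rw [← e3]; ring

lemma ftc_part {a b c : ℝ} (ha : 0 < a) (hb : 0 < b) (hc : c = a / b) (hc1 : 1 ≤ c) :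
    ∫ γ in (1:ℝ)..c, (a - γ * b) * γ ^ (-(3:ℝ)/2)
      = 2 * (Real.sqrt a - Real.sqrt b) ^ 2 := by
  have hpos : ∀ γ ∈ Set.uIcc (1:ℝ) c, (0:ℝ) < γ := by
    intro γ hγ
    rw [Set.uIcc_of_le hc1] at hγ
    linarith [hγ.1]
  have hderiv : ∀ γ ∈ Set.uIcc (1:ℝ) c, HasDerivAt
      (fun γ : ℝ => -2 * a * γ ^ (-(1:ℝ)/2) - 2 * b * γ ^ ((1:ℝ)/2))
      ((a - γ * b) * γ ^ (-(3:ℝ)/2)) γ := fun γ hγ => deriv_aux (hpos γ hγ) a b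
  have hcont : ContinuousOn (fun γ : ℝ => (a - γ * b) * γ ^ (-(3:ℝ)/2)) (Set.uIcc 1 c) := by
    apply ContinuousOn.mul
    · exact (continuous_const.sub (continuous_id.mul continuous_const)).continuousOn
    · exact continuousOn_id.rpow_const fun γ hγ => Or.inl (hpos γ hγ).ne'
  rw [intervalIntegral.integral_eq_sub_of_hasDerivAt hderiv (hcont.intervalIntegrable)]
  have hc0 : (0:ℝ) < c := lt_of_lt_of_le one_pos hc1
  have hsqc : Real.sqrt c = Real.sqrt a / Real.sqrt b := by
    rw [hc, Real.sqrt_div ha.le]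
  have hcr : c ^ ((1:ℝ)/2) = Real.sqrt c := by
    rw [Real.sqrt_eq_rpow]
  have hcr' : c ^ (-(1:ℝ)/2) = (Real.sqrt c)⁻¹ := by
    rw [neg_div, Real.rpow_neg hc0.le, hcr]
  rw [hcr, hcr', hsqc, Real.one_rpow, Real.one_rpow]
  have hsa : Real.sqrt a ^ 2 = a := Real.sq_sqrt ha.le
  have hsb : Real.sqrt b ^ 2 = b := Real.sq_sqrt hb.le
  have hsa0 : 0 < Real.sqrt a := Real.sqrt_pos.mpr ha
  have hsb0 : 0 < Real.sqrt b := Real.sqrt_pos.mpr hb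
  rw [inv_div]
  field_simp
  nlinarith [hsa, hsb, sq_nonneg (Real.sqrt a - Real.sqrt b)]

lemma key2 {a b : ℝ} (hb : 0 ≤ b) (hba : b ≤ a) :
    IntegrableOn (fun γ => max (a - γ * b) 0 * γ ^ (-(3:ℝ)/2)) (Ioi (1:ℝ)) ∧
      ∫ γ in Ioi (1:ℝ), max (a - γ * b) 0 * γ ^ (-(3:ℝ)/2)
        = 2 * (Real.sqrt a - Real.sqrt b) ^ 2 := by
  have ha : 0 ≤ a := hb.trans hba
  rcases eq_or_lt_of_le hb with hb0 | hb'
  · -- b = 0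
    have heq : (fun γ : ℝ => max (a - γ * b) 0 * γ ^ (-(3:ℝ)/2))
        = fun γ : ℝ => a * γ ^ (-(3:ℝ)/2) := by
      funext γ; rw [← hb0]; rw [mul_zero, sub_zero, max_eq_left ha]
    rw [heq]
    constructor
    · exact (integrableOn_Ioi_rpow_of_lt (by norm_num) one_pos).const_mul a
    · rw [integral_const_mul, integral_Ioi_rpow_of_lt (by norm_num) one_pos]
      rw [← hb0, Real.sqrt_zero, sub_zero, Real.sq_sqrt ha, Real.one_rpow]
      ring
  · -- b > 0
    have ha' : 0 < a := lt_of_lt_of_le hb' hba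
    set c : ℝ := a / b with hc
    have hc1 : 1 ≤ c := (one_le_div hb').mpr hba
    have hsplit : Ioi (1:ℝ) = Ioc 1 c ∪ Ioi c := (Set.Ioc_union_Ioi_eq_Ioi hc1).symm
    have heq1 : EqOn (fun γ : ℝ => max (a - γ * b) 0 * γ ^ (-(3:ℝ)/2))
        (fun γ : ℝ => (a - γ * b) * γ ^ (-(3:ℝ)/2)) (Ioc 1 c) := by
      intro γ hγ
      have : γ * b ≤ a := by
        rw [← le_div_iff₀ hb']
        exact hγ.2
      simp only
      rw [max_eq_left (by linarith)]
    have heq2 : EqOn (fun γ : ℝ => max (a - γ * b) 0 * γ ^ (-(3:ℝ)/2))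
        (fun _ : ℝ => (0:ℝ)) (Ioi c) := by
      intro γ hγ
      have : a < γ * b := by
        rw [← div_lt_iff₀ hb']
        exact hγ
      simp only
      rw [max_eq_right (by linarith), zero_mul]
    have hcont : ContinuousOn (fun γ : ℝ => (a - γ * b) * γ ^ (-(3:ℝ)/2)) (Icc 1 c) := by
      apply ContinuousOn.mul
      · exact (continuous_const.sub (continuous_id.mul continuous_const)).continuousOn
      · exact continuousOn_id.rpow_const fun γ hγ => Or.inl (by
          have := hγ.1; positivity)
    have hint1 : IntegrableOn (fun γ : ℝ => max (a - γ * b) 0 * γ ^ (-(3:ℝ)/2)) (Ioc 1 c) := by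
      apply IntegrableOn.congr_fun _ heq1.symm measurableSet_Ioc
      exact (hcont.integrableOn_Icc).mono_set Ioc_subset_Icc_self
    have hint2 : IntegrableOn (fun γ : ℝ => max (a - γ * b) 0 * γ ^ (-(3:ℝ)/2)) (Ioi c) := by
      apply IntegrableOn.congr_fun _ heq2.symm measurableSet_Ioi
      exact integrableOn_zero
    constructor
    · rw [hsplit]; exact hint1.union hint2
    · rw [hsplit, setIntegral_union (Set.Ioc_disjoint_Ioi le_rfl) measurableSet_Ioi hint1 hint2]
      rw [setIntegral_congr_fun measurableSet_Ioi heq2, integral_const]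
      rw [setIntegral_congr_fun measurableSet_Ioc heq1]
      rw [← intervalIntegral.integral_of_le hc1, ftc_part ha' hb' hc hc1]
      simp

lemma key1 {a b : ℝ} (hb : 0 ≤ b) (hba : b ≤ a) :
    IntegrableOn (Fk a b) (Ioi (1:ℝ)) ∧
      ∫ γ in Ioi (1:ℝ), Fk a b γ = 2 * (Real.sqrt a - Real.sqrt b) ^ 2 := by
  have ha : 0 ≤ a := hb.trans hba
  have heq : EqOn (Fk a b) (fun γ => max (a - γ * b) 0 * γ ^ (-(3:ℝ)/2)) (Ioi 1) := by
    intro γ hγ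
    have hγ1 : (1:ℝ) ≤ γ := le_of_lt hγ
    have : b - γ * a ≤ 0 := by nlinarith
    unfold Fk
    rw [max_eq_right this, add_zero]
  obtain ⟨h1, h2⟩ := key2 hb hba
  refine ⟨h1.congr_fun heq.symm measurableSet_Ioi, ?_⟩
  rw [setIntegral_congr_fun measurableSet_Ioi heq, h2]

lemma key {a b : ℝ} (ha : 0 ≤ a) (hb : 0 ≤ b) :
    IntegrableOn (Fk a b) (Ioi (1:ℝ)) ∧
      ∫ γ in Ioi (1:ℝ), Fk a b γ = 2 * (Real.sqrt a - Real.sqrt b) ^ 2 := by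
  rcases le_total b a with h | h
  · exact key1 hb h
  · have hswap : Fk a b = Fk b a := by
      funext γ; unfold Fk; rw [add_comm]
    have hsq : (Real.sqrt a - Real.sqrt b) ^ 2 = (Real.sqrt b - Real.sqrt a) ^ 2 := by ring
    rw [hswap, hsq]
    exact key1 ha h

theorem stmt3_aux {α : Type*} [MeasurableSpace α] (μ : Measure α) [SigmaFinite μ] (f g : α → ℝ)
    (hf : Measurable f) (hg : Measurable g)
    (hf0 : ∀ x, 0 ≤ f x) (hg0 : ∀ x, 0 ≤ g x)
    (hfi : Integrable f μ) (hgi : Integrable g μ) :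
    ∫ x, (Real.sqrt (f x) - Real.sqrt (g x)) ^ 2 ∂μ
      = (1 / 2) * ∫ γ in Set.Ioi (1 : ℝ),
          ((∫ x, max (f x - γ * g x) 0 ∂μ) + (∫ x, max (g x - γ * f x) 0 ∂μ))
            * γ ^ (-(3 : ℝ) / 2) := by
  have h1 : ∀ x, IntegrableOn (Fk (f x) (g x)) (Ioi (1:ℝ)) ∧
      ∫ γ in Ioi (1:ℝ), Fk (f x) (g x) γ
        = 2 * (Real.sqrt (f x) - Real.sqrt (g x)) ^ 2 :=
    fun x => key (hf0 x) (hg0 x)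
  have hsqrtf : Measurable fun x => Real.sqrt (f x) := Real.continuous_sqrt.measurable.comp hf
  have hsqrtg : Measurable fun x => Real.sqrt (g x) := Real.continuous_sqrt.measurable.comp hg
  have hsq_meas : Measurable fun x => (Real.sqrt (f x) - Real.sqrt (g x)) ^ 2 :=
    (hsqrtf.sub hsqrtg).pow_const 2
  have hsq_int : Integrable (fun x => (Real.sqrt (f x) - Real.sqrt (g x)) ^ 2) μ := by
    apply (hfi.add hgi).mono hsq_meas.aestronglyMeasurable
    apply ae_of_all
    intro x
    simp only [Pi.add_apply]
    rw [Real.norm_of_nonneg (sq_nonneg _),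
      Real.norm_of_nonneg (add_nonneg (hf0 x) (hg0 x))]
    nlinarith [Real.sq_sqrt (hf0 x), Real.sq_sqrt (hg0 x), Real.sqrt_nonneg (f x),
      Real.sqrt_nonneg (g x), mul_nonneg (Real.sqrt_nonneg (f x)) (Real.sqrt_nonneg (g x))]
  have hrpow : Measurable fun γ : ℝ => γ ^ (-(3:ℝ)/2) := by fun_prop
  have hFmeas : Measurable (Function.uncurry fun x γ => Fk (f x) (g x) γ) := by
    unfold Fk Function.uncurry
    apply Measurable.mul
    · apply Measurable.add
      · exact ((hf.comp measurable_fst).sub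
          (measurable_snd.mul (hg.comp measurable_fst))).max measurable_const
      · exact ((hg.comp measurable_fst).sub
          (measurable_snd.mul (hf.comp measurable_fst))).max measurable_const
    · exact hrpow.comp measurable_snd
  have hprod : Integrable (Function.uncurry fun x γ => Fk (f x) (g x) γ)
      (μ.prod (volume.restrict (Ioi 1))) := by
    rw [integrable_prod_iff hFmeas.aestronglyMeasurable]
    constructor
    · exact ae_of_all _ fun x => (h1 x).1
    · have heq : (fun x => ∫ γ in Ioi (1:ℝ), ‖Fk (f x) (g x) γ‖)
          = fun x => 2 * (Real.sqrt (f x) - Real.sqrt (g x)) ^ 2 := by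
        funext x
        rw [← (h1 x).2]
        apply setIntegral_congr_fun measurableSet_Ioi
        intro γ hγ
        exact Real.norm_of_nonneg (Fk_nonneg (le_of_lt (lt_of_lt_of_le one_pos (le_of_lt hγ))))
      show Integrable (fun x => ∫ γ in Ioi (1:ℝ), ‖Fk (f x) (g x) γ‖) μ
      rw [heq]
      exact hsq_int.const_mul 2
  calc ∫ x, (Real.sqrt (f x) - Real.sqrt (g x)) ^ 2 ∂μ
      = ∫ x, (1/2) * (∫ γ in Ioi (1:ℝ), Fk (f x) (g x) γ) ∂μ := by
        apply integral_congr_ae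
        apply ae_of_all
        intro x
        dsimp only
        rw [(h1 x).2]
        ring
    _ = (1/2) * ∫ x, (∫ γ in Ioi (1:ℝ), Fk (f x) (g x) γ) ∂μ :=
        integral_const_mul _ _
    _ = (1/2) * ∫ γ in Ioi (1:ℝ), (∫ x, Fk (f x) (g x) γ ∂μ) := by
        rw [integral_integral_swap hprod]
    _ = (1 / 2) * ∫ γ in Set.Ioi (1 : ℝ),
          ((∫ x, max (f x - γ * g x) 0 ∂μ) + (∫ x, max (g x - γ * f x) 0 ∂μ))
            * γ ^ (-(3 : ℝ) / 2) := by
        congr 1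
        apply setIntegral_congr_fun measurableSet_Ioi
        intro γ hγ
        have hγ0 : 0 ≤ γ := le_of_lt (lt_of_lt_of_le one_pos (le_of_lt hγ))
        have hm1 : Integrable (fun x => max (f x - γ * g x) 0) μ := by
          apply hfi.mono ((hf.sub (hg.const_mul γ)).max measurable_const).aestronglyMeasurable
          apply ae_of_all
          intro x
          rw [Real.norm_of_nonneg (le_max_right _ _), Real.norm_of_nonneg (hf0 x)]
          apply max_le _ (hf0 x)
          show f x - γ * g x ≤ f x
          nlinarith [hg0 x]
        have hm2 : Integrable (fun x => max (g x - γ * f x) 0) μ := by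
          apply hgi.mono ((hg.sub (hf.const_mul γ)).max measurable_const).aestronglyMeasurable
          apply ae_of_all
          intro x
          rw [Real.norm_of_nonneg (le_max_right _ _), Real.norm_of_nonneg (hg0 x)]
          apply max_le _ (hg0 x)
          show g x - γ * f x ≤ g x
          nlinarith [hf0 x]
        show ∫ x, Fk (f x) (g x) γ ∂μ = _
        unfold Fk
        rw [integral_mul_const, integral_add hm1 hm2]

theorem stmt3 {α : Type*} [MeasurableSpace α] (μ : Measure α) (f g : α → ℝ)
    (hf : Measurable f) (hg : Measurable g)
    (hf0 : ∀ x, 0 ≤ f x) (hg0 : ∀ x, 0 ≤ g x)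
    (hfi : Integrable f μ) (hgi : Integrable g μ)
    (hf1 : ∫ x, f x ∂μ = 1) (hg1 : ∫ x, g x ∂μ = 1) :
    ∫ x, (Real.sqrt (f x) - Real.sqrt (g x)) ^ 2 ∂μ
      = (1 / 2) * ∫ γ in Set.Ioi (1 : ℝ),
          ((∫ x, max (f x - γ * g x) 0 ∂μ) + (∫ x, max (g x - γ * f x) 0 ∂μ))
            * γ ^ (-(3 : ℝ) / 2) := by
  obtain ⟨t, htm, htz, htsf⟩ := (hfi.add hgi).aefinStronglyMeasurable.exists_set_sigmaFinite
  have hae : ∀ᵐ x ∂μ, x ∈ tᶜ → f x + g x = 0 := by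
    rw [← ae_restrict_iff' htm.compl]
    filter_upwards [htz] with x hx
    simpa using hx
  set N : Set α := tᶜ ∩ {x | f x + g x ≠ 0} with hN
  have hN0 : μ N = 0 := by
    have := ae_iff.mp hae
    convert this using 2
    ext x
    simp [hN]
  set s : Set α := t ∪ N with hs
  have hzero : ∀ x ∉ s, f x = 0 ∧ g x = 0 := by
    intro x hx
    rw [hs, Set.mem_union] at hx
    push_neg at hx
    have hxt : x ∈ tᶜ := hx.1
    have hfg : f x + g x = 0 := by
      by_contra hne
      exact hx.2 ⟨hxt, hne⟩
    constructor <;> linarith [hf0 x, hg0 x]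
  haveI hsfN : SigmaFinite (μ.restrict N) := by
    rw [Measure.restrict_eq_zero.mpr hN0]
    infer_instance
  haveI hsft : SigmaFinite (μ.restrict t) := htsf
  haveI hsfs : SigmaFinite (μ.restrict s) := by
    rw [hs]
    infer_instance
  have e1 : ∫ x, (Real.sqrt (f x) - Real.sqrt (g x)) ^ 2 ∂μ
      = ∫ x in s, (Real.sqrt (f x) - Real.sqrt (g x)) ^ 2 ∂μ := by
    refine (setIntegral_eq_integral_of_forall_compl_eq_zero fun x hx => ?_).symm
    obtain ⟨h1, h2⟩ := hzero x hx
    simp [h1, h2]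
  have e2 : ∀ γ : ℝ, ∫ x in s, max (f x - γ * g x) 0 ∂μ = ∫ x, max (f x - γ * g x) 0 ∂μ := by
    intro γ
    refine setIntegral_eq_integral_of_forall_compl_eq_zero fun x hx => ?_
    obtain ⟨h1, h2⟩ := hzero x hx
    simp [h1, h2]
  have e3 : ∀ γ : ℝ, ∫ x in s, max (g x - γ * f x) 0 ∂μ = ∫ x, max (g x - γ * f x) 0 ∂μ := by
    intro γ
    refine setIntegral_eq_integral_of_forall_compl_eq_zero fun x hx => ?_
    obtain ⟨h1, h2⟩ := hzero x hx
    simp [h1, h2]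
  rw [e1, stmt3_aux (μ.restrict s) f g hf hg hf0 hg0 hfi.restrict hgi.restrict]
  congr 1
  apply setIntegral_congr_fun measurableSet_Ioi
  intro γ hγ
  dsimp only
  rw [e2 γ, e3 γ]
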